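/- Let μ and ν be atomless probability measures on ℝ with finite first moments and let f' < x' be reals with μ((f',x')) = ν((f',x')) and ∫_{(f',x')} w dμ(w) = ∫_{(f',x')} w dν(w). Then, with D(k) = P_ν(k) − P_μ(k), one has D(x') − D(f') = (x' − f')·(ν((−∞,f')) − μ((−∞,f'))). -/

import Mathlib

open MeasureTheory Set

/-- The put price function `P_η(k) = ∫ (k-x)⁺ dη(x)`. -/
noncomputable def putPrice (η : Measure ℝ) (k : ℝ) : ℝ := ∫ x, max (k - x) 0 ∂η

/-- `π` is a martingale coupling of `μ` and `ν`. -/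
def IsMartingaleCoupling (μ ν : Measure ℝ) (π : Measure (ℝ × ℝ)) : Prop :=
  IsProbabilityMeasure π ∧ π.map Prod.fst = μ ∧ π.map Prod.snd = ν ∧
    ∀ B : Set ℝ, MeasurableSet B →
      ∫ p in B ×ˢ (Set.univ : Set ℝ), p.2 ∂π = ∫ x in B, x ∂μ

/-- The American-put payoff under coupling `π` and exercise set `B`. -/
noncomputable def amPayoff (K₁ K₂ : ℝ) (π : Measure (ℝ × ℝ)) (B : Set ℝ) : ℝ :=
  ∫ p, (B.indicator (fun x => max (K₁ - x) 0) p.1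
      + Bᶜ.indicator (fun _ => max (K₂ - p.2) 0) p.1) ∂π

lemma put_diff (η : Measure ℝ) [IsProbabilityMeasure η]
    (hint : Integrable (fun w => w) η) (f' x' : ℝ) (hfx : f' ≤ x')
    (hf : η {f'} = 0) :
    putPrice η x' - putPrice η f'
      = (x' - f') * (η (Set.Iio f')).toReal
        + x' * (η (Set.Ioo f' x')).toReal - ∫ w in Set.Ioo f' x', w ∂η := by
  have hi : ∀ k : ℝ, Integrable (fun w => max (k - w) 0) η := fun k =>
    ((integrable_const k).sub hint).pos_part
  have h1 : putPrice η x' - putPrice η f'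
      = ∫ w, (max (x' - w) 0 - max (f' - w) 0) ∂η := by
    rw [putPrice, putPrice, ← integral_sub (hi x') (hi f')]
  have h2 : ∀ w : ℝ, max (x' - w) 0 - max (f' - w) 0
      = (Set.Iic f').indicator (fun _ => x' - f') w
        + (Set.Ioo f' x').indicator (fun w => x' - w) w := by
    intro w
    rcases le_or_gt w f' with h | h
    · rw [Set.indicator_of_mem (by exact h),
        Set.indicator_of_notMem (by simp [Set.mem_Ioo, not_lt.2 h]),
        max_eq_left (sub_nonneg.2 (h.trans hfx)), max_eq_left (sub_nonneg.2 h)]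
      ring
    · rw [Set.indicator_of_notMem (by simpa using h)]
      rcases lt_or_ge w x' with h' | h'
      · rw [Set.indicator_of_mem (by exact ⟨h, h'⟩),
          max_eq_left (sub_nonneg.2 h'.le), max_eq_right (by linarith)]
        ring
      · rw [Set.indicator_of_notMem (by simp [Set.mem_Ioo, not_lt.2 h']),
          max_eq_right (by linarith), max_eq_right (by linarith)]
        ring
  have hIic : η (Set.Iic f') = η (Set.Iio f') := by
    rw [← Set.Iio_union_right, measure_union (by simp) (measurableSet_singleton _), hf,
      add_zero]
  rw [h1]
  calc ∫ w, (max (x' - w) 0 - max (f' - w) 0) ∂η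
      = ∫ w, ((Set.Iic f').indicator (fun _ => x' - f') w
        + (Set.Ioo f' x').indicator (fun w => x' - w) w) ∂η := by
        exact integral_congr_ae (Filter.Eventually.of_forall h2)
    _ = (∫ w, (Set.Iic f').indicator (fun _ => x' - f') w ∂η)
        + ∫ w, (Set.Ioo f' x').indicator (fun w => x' - w) w ∂η := by
        exact integral_add ((integrable_const _).indicator measurableSet_Iic)
          (((integrable_const x').sub hint).indicator measurableSet_Ioo)
    _ = (x' - f') * (η (Set.Iio f')).toReal
        + x' * (η (Set.Ioo f' x')).toReal - ∫ w in Set.Ioo f' x', w ∂η := by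
        rw [integral_indicator measurableSet_Iic, integral_indicator measurableSet_Ioo,
          setIntegral_const, measureReal_def, hIic,
          integral_sub (integrableOn_const (C := x') (s := Set.Ioo f' x') (μ := η) (measure_lt_top _ _).ne)
            hint.integrableOn, setIntegral_const, measureReal_def]
        simp [mul_comm]
        ring

/-- If `(f',x')` carries the same `μ`- and `ν`-mass and mean, then
`D(x') - D(f') = (x'-f')·(ν((-∞,f')) - μ((-∞,f')))` where `D = P_ν - P_μ`. -/
theorem D_difference_identity
    (μ ν : Measure ℝ) [IsProbabilityMeasure μ] [IsProbabilityMeasure ν]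
    (hμint : Integrable (fun w => w) μ) (hνint : Integrable (fun w => w) ν)
    (hμa : ∀ w : ℝ, μ {w} = 0) (hνa : ∀ w : ℝ, ν {w} = 0)
    (f' x' : ℝ) (hfx : f' < x')
    (hmass : μ (Set.Ioo f' x') = ν (Set.Ioo f' x'))
    (hmean : ∫ w in Set.Ioo f' x', w ∂μ = ∫ w in Set.Ioo f' x', w ∂ν) :
    (putPrice ν x' - putPrice μ x') - (putPrice ν f' - putPrice μ f')
      = (x' - f') * ((ν (Set.Iio f')).toReal - (μ (Set.Iio f')).toReal) := by
  have hν := put_diff ν hνint f' x' hfx.le (hνa f')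
  have hμ := put_diff μ hμint f' x' hfx.le (hμa f')
  have : (putPrice ν x' - putPrice μ x') - (putPrice ν f' - putPrice μ f')
      = (putPrice ν x' - putPrice ν f') - (putPrice μ x' - putPrice μ f') := by ring
  rw [this, hν, hμ, hmass, hmean]
  ring
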